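/- arXiv:2306.11332 — 5 statements merged into one kernel-verified Lean document; each statement's English description precedes it below -/
import Mathlib

section
/- For any Hermitian positive semidefinite matrix A of size n×n (n ≥ 1), the maximum eigenvalue κ(A) satisfies κ(A) ≤ (tr(A) + sqrt(n(n-1)·‖A‖_F² − (n-1)·tr(A)²))/n, where ‖A‖_F denotes the Frobenius norm. -/
open Matrix BigOperators ComplexOrder

lemma tr_eq {n : ℕ} (A : Matrix (Fin n) (Fin n) ℂ) (hA : A.IsHermitian) :
    A.trace = ∑ i, (hA.eigenvalues i : ℂ) := by
  conv_lhs => rw [hA.spectral_theorem, Unitary.conjStarAlgAut_apply]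
  rw [trace_mul_cycle, (Matrix.mem_unitaryGroup_iff').mp (hA.eigenvectorUnitary).2, one_mul]
  simp [trace_diagonal]

lemma tr_sq_eq {n : ℕ} (A : Matrix (Fin n) (Fin n) ℂ) (hA : A.IsHermitian) :
    Matrix.trace (Aᴴ * A) = ∑ i, (hA.eigenvalues i : ℂ)^2 := by
  set U : Matrix (Fin n) (Fin n) ℂ := (hA.eigenvectorUnitary : Matrix (Fin n) (Fin n) ℂ) with hU
  have h1 : star U * U = 1 := (Matrix.mem_unitaryGroup_iff').mp (hA.eigenvectorUnitary).2
  set D : Matrix (Fin n) (Fin n) ℂ := diagonal (RCLike.ofReal ∘ hA.eigenvalues) with hD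
  conv_lhs => rw [hA.eq, hA.spectral_theorem, Unitary.conjStarAlgAut_apply, ← hU, ← hD]
  rw [show U * D * star U * (U * D * star U) = U * (D * D) * star U from by
    simp only [← mul_assoc]; rw [mul_assoc (U*D) (star U) U, h1, mul_one],
    trace_mul_cycle, ← mul_assoc, h1, one_mul, hD, diagonal_mul_diagonal, trace_diagonal]
  simp [sq]

/-- Largest eigenvalue of a Hermitian matrix. -/
noncomputable def lamMax {n : ℕ} {A : Matrix (Fin n) (Fin n) ℂ} (hA : A.IsHermitian) : ℝ :=
  ⨆ i, hA.eigenvalues i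

/-- For a Hermitian PSD matrix, κ(A) ≤ (tr A + √(n(n−1)‖A‖_F² − (n−1)(tr A)²))/n. -/
theorem max_eigenvalue_upper_bound {n : ℕ} (hn : 1 ≤ n)
    (A : Matrix (Fin n) (Fin n) ℂ) (hA : A.PosSemidef) :
    lamMax hA.isHermitian ≤
      ((A.trace).re +
        Real.sqrt ((n : ℝ) * (n - 1) * (Matrix.trace (Aᴴ * A)).re
          - (n - 1) * (A.trace).re ^ 2)) / n := by
  have hH := hA.isHermitian
  set lam := hH.eigenvalues with hlam
  have ht : (A.trace).re = ∑ i, lam i := by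
    rw [tr_eq A hH]; simp; rfl
  have hS : (Matrix.trace (Aᴴ * A)).re = ∑ i, (lam i)^2 := by
    rw [tr_sq_eq A hH]
    simp [← Complex.ofReal_pow]; rfl
  set t : ℝ := ∑ i, lam i
  set S : ℝ := ∑ i, (lam i)^2
  have hnpos : (0:ℝ) < n := by exact_mod_cast hn
  have hne : Nonempty (Fin n) := ⟨⟨0, hn⟩⟩
  rw [ht, hS]
  apply ciSup_le
  intro i
  -- Cauchy-Schwarz on the other eigenvalues
  have hcard : ((Finset.univ.erase i).card : ℝ) = (n : ℝ) - 1 := by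
    rw [Finset.card_erase_of_mem (Finset.mem_univ i)]
    simp [Nat.cast_sub hn]
  have hCS : (∑ j ∈ Finset.univ.erase i, lam j)^2
      ≤ ((n:ℝ) - 1) * ∑ j ∈ Finset.univ.erase i, (lam j)^2 := by
    have := sq_sum_le_card_mul_sum_sq (s := Finset.univ.erase i) (f := lam)
    calc (∑ j ∈ Finset.univ.erase i, lam j)^2
        ≤ ((Finset.univ.erase i).card : ℝ) * ∑ j ∈ Finset.univ.erase i, (lam j)^2 := this
      _ = _ := by rw [hcard]
  have hsum : ∑ j ∈ Finset.univ.erase i, lam j = t - lam i := by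
    rw [Finset.sum_erase_eq_sub (Finset.mem_univ i)]
  have hsum2 : ∑ j ∈ Finset.univ.erase i, (lam j)^2 = S - (lam i)^2 := by
    rw [Finset.sum_erase_eq_sub (Finset.mem_univ i)]
  rw [hsum, hsum2] at hCS
  set x := lam i
  have key : ((n:ℝ) * x - t)^2 ≤ (n:ℝ) * ((n:ℝ) - 1) * S - ((n:ℝ) - 1) * t^2 := by
    nlinarith [mul_le_mul_of_nonneg_left hCS (le_of_lt hnpos)]
  have h2 : (n:ℝ) * x - t ≤ Real.sqrt ((n:ℝ) * ((n:ℝ) - 1) * S - ((n:ℝ) - 1) * t^2) := by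
    calc (n:ℝ) * x - t ≤ |(n:ℝ) * x - t| := le_abs_self _
      _ = Real.sqrt (((n:ℝ) * x - t)^2) := (Real.sqrt_sq_eq_abs _).symm
      _ ≤ _ := Real.sqrt_le_sqrt key
  rw [le_div_iff₀ hnpos]
  linarith
end

section
/- For any Hermitian positive definite matrix A of size n×n with inverse B = A⁻¹, the minimum eigenvalue λ(A) satisfies λ(A) ≥ n / (tr(B) + sqrt(n(n-1)·‖B‖_F² − (n-1)·tr(B)²)). -/
open Matrix BigOperators ComplexOrder

noncomputable def lamMin {n : ℕ} {A : Matrix (Fin n) (Fin n) ℂ} (hA : A.IsHermitian) : ℝ :=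
  ⨅ i, hA.eigenvalues i

theorem min_eigenvalue_lower_bound {n : ℕ} (hn : 1 ≤ n)
    (A : Matrix (Fin n) (Fin n) ℂ) (hA : A.PosDef) :
    (n : ℝ) / ((A⁻¹.trace).re +
        Real.sqrt ((n : ℝ) * (n - 1) * (Matrix.trace ((A⁻¹)ᴴ * A⁻¹)).re
          - (n - 1) * (A⁻¹.trace).re ^ 2)) ≤ lamMin hA.isHermitian := by
  classical
  haveI : Nonempty (Fin n) := Fin.pos_iff_nonempty.mp hn
  set α : Fin n → ℝ := hA.isHermitian.eigenvalues with hα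
  have hαpos : ∀ i, 0 < α i := fun i => hA.eigenvalues_pos i
  set V : Matrix (Fin n) (Fin n) ℂ :=
    (Matrix.IsHermitian.eigenvectorUnitary hA.isHermitian : Matrix (Fin n) (Fin n) ℂ) with hVdef
  have hV : star V * V = 1 :=
    Matrix.mem_unitaryGroup_iff'.mp (Matrix.IsHermitian.eigenvectorUnitary hA.isHermitian).2
  have hV' : V * star V = 1 :=
    Matrix.mem_unitaryGroup_iff.mp (Matrix.IsHermitian.eigenvectorUnitary hA.isHermitian).2
  set D : Matrix (Fin n) (Fin n) ℂ := Matrix.diagonal (fun i => ((α i : ℂ))) with hD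
  set D' : Matrix (Fin n) (Fin n) ℂ := Matrix.diagonal (fun i => ((α i : ℂ))⁻¹) with hD'
  have hspec : A = V * D * star V := hA.isHermitian.spectral_theorem
  have hDD' : D * D' = 1 := by
    rw [hD, hD', Matrix.diagonal_mul_diagonal]
    have hfun : (fun i => (α i : ℂ) * ((α i : ℂ))⁻¹) = fun _ => 1 :=
      funext fun i => mul_inv_cancel₀ (by exact_mod_cast (hαpos i).ne')
    rw [hfun, Matrix.diagonal_one]
  have hAinv : A⁻¹ = V * D' * star V := by
    apply Matrix.inv_eq_right_inv
    calc A * (V * D' * star V) = V * (D * ((star V * V) * (D' * star V))) := by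
          rw [hspec]; simp only [Matrix.mul_assoc]
      _ = V * (D * D') * star V := by
          rw [hV, Matrix.one_mul]; simp only [Matrix.mul_assoc]
      _ = 1 := by rw [hDD', Matrix.mul_one, hV']
  -- traces
  have htr : A⁻¹.trace = ∑ i, ((α i : ℂ))⁻¹ := by
    rw [hAinv, Matrix.trace_mul_comm, ← Matrix.mul_assoc, hV, Matrix.one_mul, hD',
      Matrix.trace_diagonal]
  have htr2 : Matrix.trace ((A⁻¹)ᴴ * A⁻¹) = ∑ i, (((α i : ℂ))⁻¹ * ((α i : ℂ))⁻¹) := by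
    have hherm : (A⁻¹)ᴴ = A⁻¹ := by
      rw [Matrix.conjTranspose_nonsing_inv, hA.isHermitian.eq]
    rw [hherm, hAinv]
    have : V * D' * star V * (V * D' * star V) = V * (D' * D') * star V := by
      calc V * D' * star V * (V * D' * star V)
          = V * (D' * ((star V * V) * (D' * star V))) := by simp only [Matrix.mul_assoc]
        _ = V * (D' * D') * star V := by
            rw [hV, Matrix.one_mul]; simp only [Matrix.mul_assoc]
    rw [this, Matrix.trace_mul_comm, ← Matrix.mul_assoc, hV, Matrix.one_mul]
    rw [hD', Matrix.diagonal_mul_diagonal, Matrix.trace_diagonal]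
  set μ : Fin n → ℝ := fun i => (α i)⁻¹ with hμ
  have hμpos : ∀ i, 0 < μ i := fun i => inv_pos.mpr (hαpos i)
  set t : ℝ := ∑ i, μ i with ht
  set Q : ℝ := ∑ i, μ i ^ 2 with hQ
  have htre : (A⁻¹.trace).re = t := by
    rw [htr, Complex.re_sum, ht]
    refine Finset.sum_congr rfl fun i _ => ?_
    rw [← Complex.ofReal_inv]
    exact Complex.ofReal_re _
  have htr2re : (Matrix.trace ((A⁻¹)ᴴ * A⁻¹)).re = Q := by
    rw [htr2, Complex.re_sum, hQ]
    refine Finset.sum_congr rfl fun i _ => ?_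
    rw [← Complex.ofReal_inv, ← Complex.ofReal_mul, Complex.ofReal_re, sq]
  rw [htre, htr2re, lamMin]
  set S : ℝ := (n : ℝ) * ((n : ℝ) - 1) * Q - ((n : ℝ) - 1) * t ^ 2 with hS
  refine le_ciInf fun i => ?_
  set m : ℝ := μ i with hm
  have hmpos : 0 < m := hμpos i
  -- Cauchy-Schwarz on the complement
  have hCS : (∑ j ∈ Finset.univ.erase i, μ j) ^ 2
      ≤ ((n : ℝ) - 1) * ∑ j ∈ Finset.univ.erase i, μ j ^ 2 := by
    have h := sq_sum_le_card_mul_sum_sq (s := Finset.univ.erase i) (f := μ)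
    have hcard : ((Finset.univ.erase i).card : ℝ) = (n : ℝ) - 1 := by
      rw [Finset.card_erase_of_mem (Finset.mem_univ i), Finset.card_univ, Fintype.card_fin]
      push_cast [Nat.cast_sub hn]
      ring
    calc (∑ j ∈ Finset.univ.erase i, μ j) ^ 2
        ≤ ((Finset.univ.erase i).card : ℝ) * ∑ j ∈ Finset.univ.erase i, μ j ^ 2 := by
          exact_mod_cast h
      _ = ((n : ℝ) - 1) * ∑ j ∈ Finset.univ.erase i, μ j ^ 2 := by rw [hcard]
  have hsum1 : ∑ j ∈ Finset.univ.erase i, μ j = t - m := by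
    rw [ht, hm]; exact Finset.sum_erase_eq_sub (Finset.mem_univ i)
  have hsum2 : ∑ j ∈ Finset.univ.erase i, μ j ^ 2 = Q - m ^ 2 := by
    rw [hQ, hm]; exact Finset.sum_erase_eq_sub (Finset.mem_univ i)
  rw [hsum1, hsum2] at hCS
  have hn1 : (1 : ℝ) ≤ (n : ℝ) := by exact_mod_cast hn
  have hkey : ((n : ℝ) * m - t) ^ 2 ≤ S := by
    rw [hS]
    nlinarith [mul_le_mul_of_nonneg_left hCS (by linarith : (0:ℝ) ≤ (n : ℝ)), sq_nonneg m,
      sq_nonneg t]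
  have hSnonneg : 0 ≤ S := le_trans (sq_nonneg _) hkey
  have hsqrt : (n : ℝ) * m - t ≤ Real.sqrt S := by
    calc (n : ℝ) * m - t ≤ |(n : ℝ) * m - t| := le_abs_self _
      _ = Real.sqrt (((n : ℝ) * m - t) ^ 2) := (Real.sqrt_sq_eq_abs _).symm
      _ ≤ Real.sqrt S := Real.sqrt_le_sqrt hkey
  have hnm : (n : ℝ) * m ≤ t + Real.sqrt S := by linarith
  have hDpos : 0 < t + Real.sqrt S := lt_of_lt_of_le (by nlinarith) hnm
  have hαm : α i = m⁻¹ := by rw [hm, hμ]; simp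
  rw [← hα, hαm, div_le_iff₀ hDpos]
  calc (n : ℝ) = ((n : ℝ) * m) * m⁻¹ := by field_simp
    _ ≤ (t + Real.sqrt S) * m⁻¹ := by gcongr
    _ = m⁻¹ * (t + Real.sqrt S) := mul_comm _ _
end

section
/- Let n ≥ 1 and let t, s be reals with t > 0 and t²/n ≤ s ≤ t². Then the maximum of max_i η_i over all vectors η ∈ ℝⁿ with η ≥ 0, Σᵢ ηᵢ = t, and Σᵢ ηᵢ² = s equals (t + sqrt(n(n-1)s − (n-1)t²))/n. -/
open BigOperators

set_option maxHeartbeats 1000000 in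
theorem max_coordinate_optimization {n : ℕ} (hn : 1 ≤ n) (t s : ℝ) (ht : 0 < t)
    (hs1 : t ^ 2 / n ≤ s) (hs2 : s ≤ t ^ 2) :
    IsGreatest
      { y : ℝ | ∃ η : Fin n → ℝ, (∀ i, 0 ≤ η i) ∧ (∑ i, η i) = t ∧ (∑ i, (η i) ^ 2) = s ∧
          y = ⨆ i, η i }
      ((t + Real.sqrt ((n : ℝ) * (n - 1) * s - (n - 1) * t ^ 2)) / n) := by
  rcases eq_or_lt_of_le hn with h1 | h1
  · -- n = 1
    subst h1
    have hst : s = t ^ 2 := by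
      have : t ^ 2 / ((1:ℕ):ℝ) = t ^ 2 := by norm_num
      linarith [hs1, this]
    have harg : ((1:ℕ) : ℝ) * (((1:ℕ):ℝ) - 1) * s - (((1:ℕ):ℝ) - 1) * t ^ 2 = 0 := by
      norm_num
    have hval : (t + Real.sqrt (((1:ℕ) : ℝ) * (((1:ℕ):ℝ) - 1) * s - (((1:ℕ):ℝ) - 1) * t ^ 2))
        / ((1:ℕ):ℝ) = t := by
      rw [harg, Real.sqrt_zero]; norm_num
    rw [hval]
    constructor
    · exact ⟨fun _ => t, fun _ => le_of_lt ht, by simp, by simp [hst.symm], by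
        rw [ciSup_const]⟩
    · rintro y ⟨η, hpos, hsumt, hsums, rfl⟩
      rw [ciSup_unique]
      have : η default = t := by
        rw [← hsumt]; simp [Fin.sum_univ_one]
      linarith [this.le]
  · -- n ≥ 2
    have hn2 : (2:ℝ) ≤ n := by exact_mod_cast h1
    have hn0 : (0:ℝ) < n := by linarith
    have hn1' : (0:ℝ) < (n:ℝ) - 1 := by linarith
    have hns : t ^ 2 ≤ n * s := by
      rw [div_le_iff₀ hn0] at hs1; linarith [hs1]
    set d : ℝ := (n : ℝ) * ((n:ℝ) - 1) * s - ((n:ℝ) - 1) * t ^ 2 with hd_def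
    have hd : 0 ≤ d := by
      nlinarith [mul_nonneg (le_of_lt hn1') (by linarith : 0 ≤ (n:ℝ)*s - t^2)]
    set r : ℝ := Real.sqrt d with hr_def
    have hr0 : 0 ≤ r := Real.sqrt_nonneg d
    have hr2 : r ^ 2 = d := Real.sq_sqrt hd
    have hdle : d ≤ (((n:ℝ) - 1) * t) ^ 2 := by
      nlinarith [mul_nonneg (le_of_lt hn1') (by nlinarith : 0 ≤ (n:ℝ)*(t^2 - s))]
    have hrn : r ≤ ((n:ℝ) - 1) * t := by
      calc r ≤ Real.sqrt ((((n:ℝ) - 1) * t) ^ 2) := Real.sqrt_le_sqrt hdle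
      _ = ((n:ℝ) - 1) * t := Real.sqrt_sq (by positivity)
    obtain ⟨M, hM_def⟩ : ∃ M : ℝ, M = (t + r) / n := ⟨_, rfl⟩
    have hnM : (n:ℝ) * M = t + r := by rw [hM_def]; field_simp
    have hM0 : 0 < M := by rw [hM_def]; positivity
    have hMt : M ≤ t := by nlinarith
    have htnM : t ≤ (n:ℝ) * M := by rw [hnM]; linarith
    have hquad : (n:ℝ) * M ^ 2 - 2 * t * M + t ^ 2 = ((n:ℝ) - 1) * s := by
      have h : ((n:ℝ) * M) ^ 2 = (t + r) ^ 2 := by rw [hnM]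
      have h2 : (n:ℝ) * ((n:ℝ) * M ^ 2 - 2 * t * M + t ^ 2) = (n:ℝ) * (((n:ℝ) - 1) * s) := by
        nlinarith [h, hr2]
      exact mul_left_cancel₀ (ne_of_gt hn0) h2
    haveI : Nonempty (Fin n) := ⟨⟨0, hn⟩⟩
    have hM_goal : (t + r) / (n:ℝ) = M := hM_def.symm
    rw [hM_goal]
    have i0 : Fin n := ⟨0, hn⟩
    obtain ⟨a, ha_def⟩ : ∃ a : ℝ, a = (t - M) / ((n:ℝ) - 1) := ⟨_, rfl⟩
    have ha : ((n:ℝ) - 1) * a = t - M := by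
      rw [ha_def]; field_simp
    have ha0 : 0 ≤ a := by rw [ha_def]; exact div_nonneg (by linarith) (le_of_lt hn1')
    have haM : a ≤ M := by nlinarith
    constructor
    · refine ⟨Function.update (fun _ => a) i0 M, ?_, ?_, ?_, ?_⟩
      · intro i
        rcases eq_or_ne i i0 with h | h
        · rw [h, Function.update_self]; exact le_of_lt hM0
        · rw [Function.update_of_ne h]; exact ha0
      · rw [Finset.sum_update_of_mem (Finset.mem_univ i0), Finset.sum_const]
        have hcard : ((((Finset.univ : Finset (Fin n)) \ {i0}).card : ℕ) : ℝ) = (n:ℝ) - 1 := by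
          rw [Finset.sdiff_singleton_eq_erase, Finset.card_erase_of_mem (Finset.mem_univ i0),
            Finset.card_univ, Fintype.card_fin, Nat.cast_sub hn]; simp
        rw [nsmul_eq_mul, hcard, ha]; ring
      · have heq : ∀ i, (Function.update (fun _ => a) i0 M i) ^ 2
            = Function.update (fun _ => a ^ 2) i0 (M ^ 2) i := by
          intro i
          rcases eq_or_ne i i0 with h | h
          · rw [h, Function.update_self, Function.update_self]
          · rw [Function.update_of_ne h, Function.update_of_ne h]
        rw [Finset.sum_congr rfl (fun i _ => heq i)]
        rw [Finset.sum_update_of_mem (Finset.mem_univ i0), Finset.sum_const]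
        have hcard : ((((Finset.univ : Finset (Fin n)) \ {i0}).card : ℕ) : ℝ) = (n:ℝ) - 1 := by
          rw [Finset.sdiff_singleton_eq_erase, Finset.card_erase_of_mem (Finset.mem_univ i0),
            Finset.card_univ, Fintype.card_fin, Nat.cast_sub hn]; simp
        rw [nsmul_eq_mul, hcard]
        have h2 : (((n:ℝ) - 1) * a) ^ 2 = (t - M) ^ 2 := by rw [ha]
        have key : ((n:ℝ) - 1) * (M ^ 2 + ((n:ℝ) - 1) * a ^ 2) = ((n:ℝ) - 1) * s := by
          linear_combination h2 + hquad
        exact mul_left_cancel₀ (ne_of_gt hn1') key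
      · symm
        apply le_antisymm
        · apply ciSup_le
          intro i
          rcases eq_or_ne i i0 with h | h
          · rw [h, Function.update_self]
          · rw [Function.update_of_ne h]; exact haM
        · have h := le_ciSup (Finite.bddAbove_range (Function.update (fun _ => a) i0 M)) i0
          rwa [Function.update_self] at h
    · rintro y ⟨η, hpos, hsumt, hsums, rfl⟩
      obtain ⟨j0, hj0⟩ := Finite.exists_max η
      have hsup : ⨆ i, η i = η j0 :=
        le_antisymm (ciSup_le hj0) (le_ciSup (Finite.bddAbove_range η) j0)
      rw [hsup]
      have hrest : ∑ i ∈ Finset.univ.erase j0, η i = t - η j0 := by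
        have h := Finset.sum_erase_add Finset.univ η (Finset.mem_univ j0)
        linarith [h, hsumt]
      have hrest2 : ∑ i ∈ Finset.univ.erase j0, (η i) ^ 2 = s - (η j0) ^ 2 := by
        have h := Finset.sum_erase_add Finset.univ (fun i => (η i) ^ 2) (Finset.mem_univ j0)
        linarith [h, hsums]
      have hcs : (∑ i ∈ Finset.univ.erase j0, η i) ^ 2
          ≤ (((Finset.univ.erase j0).card : ℕ) : ℝ) * ∑ i ∈ Finset.univ.erase j0, (η i) ^ 2 :=
        sq_sum_le_card_mul_sum_sq
      have hcard : (((Finset.univ.erase j0).card : ℕ) : ℝ) = (n:ℝ) - 1 := by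
        rw [Finset.card_erase_of_mem (Finset.mem_univ j0), Finset.card_univ, Fintype.card_fin,
          Nat.cast_sub hn]; simp
      rw [hrest, hrest2, hcard] at hcs
      have h3 : (n:ℝ) * (t - η j0) ^ 2 ≤ (n:ℝ) * (((n:ℝ) - 1) * (s - (η j0) ^ 2)) :=
        mul_le_mul_of_nonneg_left hcs hn0.le
      have hkey : ((n:ℝ) * η j0 - t) ^ 2 ≤ d := by
        rw [hd_def]; nlinarith [h3]
      have habs : (n:ℝ) * η j0 - t ≤ r := by
        calc (n:ℝ) * η j0 - t ≤ |(n:ℝ) * η j0 - t| := le_abs_self _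
        _ = Real.sqrt (((n:ℝ) * η j0 - t) ^ 2) := (Real.sqrt_sq_eq_abs _).symm
        _ ≤ r := Real.sqrt_le_sqrt hkey
      have h4 : (n:ℝ) * η j0 ≤ (n:ℝ) * M := by rw [hnM]; linarith
      exact le_of_mul_le_mul_left h4 hn0
end

section
/- Let η ∈ ℝⁿ with ηᵢ ≥ 0 for all i, Σᵢ ηᵢ = t, and Σᵢ ηᵢ² = s, where n ≥ 2. Then every coordinate satisfies ηⱼ ≤ (t + sqrt(n(n−1)s − (n−1)t²))/n. -/
open BigOperators

theorem coordinate_upper_bound {n : ℕ} (hn : 2 ≤ n) (t s : ℝ)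
    (η : Fin n → ℝ) (hpos : ∀ i, 0 ≤ η i)
    (hsum : (∑ i, η i) = t) (hsq : (∑ i, (η i) ^ 2) = s) (j : Fin n) :
    η j ≤ (t + Real.sqrt ((n : ℝ) * (n - 1) * s - (n - 1) * t ^ 2)) / n := by
  set x := η j with hx
  have hmem : j ∈ Finset.univ := Finset.mem_univ j
  have hA : (∑ i ∈ Finset.univ.erase j, η i) = t - x := by
    rw [← hsum, ← Finset.add_sum_erase _ _ hmem]; ring
  have hB : (∑ i ∈ Finset.univ.erase j, (η i) ^ 2) = s - x ^ 2 := by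
    rw [← hsq, ← Finset.add_sum_erase _ _ hmem]; ring
  have hcard : (Finset.univ.erase j).card = n - 1 := by
    rw [Finset.card_erase_of_mem hmem, Finset.card_univ, Fintype.card_fin]
  have hCS := sq_sum_le_card_mul_sum_sq (s := Finset.univ.erase j) (f := η)
  rw [hA, hB, hcard] at hCS
  have hn1 : ((n - 1 : ℕ) : ℝ) = (n : ℝ) - 1 := by
    push_cast [Nat.cast_sub (by omega : 1 ≤ n)]; ring
  rw [hn1] at hCS
  have hnpos : (0 : ℝ) < n := by positivity
  have key : ((n : ℝ) * x - t) ^ 2 ≤ (n : ℝ) * (n - 1) * s - (n - 1) * t ^ 2 := by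
    nlinarith [hCS]
  have h1 : (n : ℝ) * x - t ≤ Real.sqrt ((n : ℝ) * (n - 1) * s - (n - 1) * t ^ 2) := by
    calc (n : ℝ) * x - t ≤ |(n : ℝ) * x - t| := le_abs_self _
    _ = Real.sqrt (((n : ℝ) * x - t) ^ 2) := (Real.sqrt_sq_eq_abs _).symm
    _ ≤ _ := Real.sqrt_le_sqrt key
  rw [le_div_iff₀ hnpos]
  nlinarith [h1]
end

section
/- For n ≥ 2 and a Hermitian positive semidefinite n×n matrix A with eigenvalues λ₁ ≥ ... ≥ λₙ ≥ 0, equality λ₁ = (tr(A) + sqrt(n(n−1)‖A‖_F² − (n−1)tr(A)²))/n holds if and only if λ₂ = λ₃ = ... = λₙ. -/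
open Matrix BigOperators ComplexOrder

theorem aux_trace' {n : ℕ} {A : Matrix (Fin n) (Fin n) ℂ} (hA : A.IsHermitian) :
    A.trace = ∑ i, (hA.eigenvalues i : ℂ) := by
  nth_rewrite 1 [hA.spectral_theorem]
  rw [Unitary.conjStarAlgAut_apply, Matrix.trace_mul_cycle,
    (Matrix.mem_unitaryGroup_iff').mp (hA.eigenvectorUnitary).2, one_mul, trace_diagonal]
  rfl

theorem aux_trace_sq' {n : ℕ} {A : Matrix (Fin n) (Fin n) ℂ} (hA : A.IsHermitian) :
    (A*A).trace = ∑ i, (hA.eigenvalues i : ℂ)^2 := by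
  obtain ⟨U, D, h1, hAeq, hD⟩ : ∃ U D : Matrix (Fin n) (Fin n) ℂ, star U * U = 1 ∧
      A = U * D * star U ∧ D = diagonal (RCLike.ofReal ∘ hA.eigenvalues) :=
    ⟨hA.eigenvectorUnitary, diagonal (RCLike.ofReal ∘ hA.eigenvalues),
      (Matrix.mem_unitaryGroup_iff').mp (hA.eigenvectorUnitary).2, hA.spectral_theorem, rfl⟩
  have key : A * A = U * (D * D) * star U := by
    rw [hAeq]
    simp only [mul_assoc]
    rw [← mul_assoc (star U) U, h1, one_mul]
  rw [key, Matrix.trace_mul_cycle, ← mul_assoc, h1, one_mul, hD, diagonal_mul_diagonal,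
    trace_diagonal]
  simp [sq]

theorem aux_cs_identity {ι : Type*} (s : Finset ι) (f : ι → ℝ) :
    ∑ i ∈ s, ∑ j ∈ s, (f i - f j)^2
      = 2 * ((s.card : ℝ) * ∑ i ∈ s, (f i)^2 - (∑ i ∈ s, f i)^2) := by
  have h : ∀ i j : ι, (f i - f j)^2 = f i^2 - 2 * (f i * f j) + f j^2 := by
    intro i j; ring
  simp only [h, Finset.sum_add_distrib, Finset.sum_sub_distrib, Finset.sum_const,
    nsmul_eq_mul, ← Finset.mul_sum, ← Finset.sum_mul]
  ring

theorem max_eigenvalue_bound_equality_iff {n : ℕ} (hn : 2 ≤ n)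
    (A : Matrix (Fin n) (Fin n) ℂ) (hA : A.PosSemidef)
    (μ : Fin n → ℝ) (hanti : Antitone μ)
    (hperm : ∃ σ : Equiv.Perm (Fin n), ∀ i, μ i = hA.isHermitian.eigenvalues (σ i)) :
    μ ⟨0, by omega⟩ =
        ((A.trace).re +
          Real.sqrt ((n : ℝ) * (n - 1) * (Matrix.trace (Aᴴ * A)).re
            - (n - 1) * (A.trace).re ^ 2)) / n ↔
      ∀ i j : Fin n, i ≠ ⟨0, by omega⟩ → j ≠ ⟨0, by omega⟩ → μ i = μ j := by
  obtain ⟨σ, hσ⟩ := hperm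
  set z : Fin n := ⟨0, by omega⟩ with hz
  -- trace identities
  have hT : (A.trace).re = ∑ i, μ i := by
    rw [aux_trace' hA.isHermitian]
    rw [Complex.re_sum]
    simp only [Complex.ofReal_re]
    rw [show (∑ i, μ i) = ∑ i, hA.isHermitian.eigenvalues (σ i) by
      exact Finset.sum_congr rfl fun i _ => hσ i]
    exact (Equiv.sum_comp σ _).symm
  have hS : (Matrix.trace (Aᴴ * A)).re = ∑ i, (μ i)^2 := by
    rw [hA.isHermitian.eq, aux_trace_sq' hA.isHermitian, Complex.re_sum]
    simp only [← Complex.ofReal_pow, Complex.ofReal_re]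
    rw [show (∑ i, (μ i)^2) = ∑ i, (hA.isHermitian.eigenvalues (σ i))^2 by
      exact Finset.sum_congr rfl fun i _ => by rw [hσ i]]
    exact (Equiv.sum_comp σ _).symm
  -- setup
  set s : Finset (Fin n) := Finset.univ.erase z with hs
  have hmem : ∀ i : Fin n, i ∈ s ↔ i ≠ z := by
    intro i; simp [hs]
  have hzmem : z ∈ Finset.univ := Finset.mem_univ z
  have hcard : (s.card : ℝ) = (n : ℝ) - 1 := by
    rw [hs, Finset.card_erase_of_mem hzmem, Finset.card_univ, Fintype.card_fin]
    have : 1 ≤ n := by omega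
    push_cast [Nat.cast_sub this]
    ring
  set x : ℝ := μ z with hx
  set R : ℝ := ∑ i ∈ s, μ i with hR
  set Q : ℝ := ∑ i ∈ s, (μ i)^2 with hQ
  have hTsplit : (∑ i, μ i) = x + R := by
    rw [hR, hs, ← Finset.add_sum_erase _ _ hzmem]
  have hSsplit : (∑ i, (μ i)^2) = x^2 + Q := by
    rw [hQ, hs, ← Finset.add_sum_erase _ _ hzmem]
  have hmax : ∀ i : Fin n, μ i ≤ x := by
    intro i
    exact hanti (by simp [hz, Fin.le_def])
  -- Δ and its nonnegativity
  set Δ : ℝ := ((n : ℝ) - 1) * Q - R^2 with hΔ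
  have hssq : ∑ i ∈ s, ∑ j ∈ s, (μ i - μ j)^2 = 2 * Δ := by
    rw [aux_cs_identity s μ, hcard, hΔ]
  have hssq_nonneg : (0:ℝ) ≤ ∑ i ∈ s, ∑ j ∈ s, (μ i - μ j)^2 :=
    Finset.sum_nonneg fun i _ => Finset.sum_nonneg fun j _ => sq_nonneg _
  have hΔ0 : 0 ≤ Δ := by linarith
  -- nx - T ≥ 0
  have hc : (0:ℝ) ≤ (n:ℝ) * x - (x + R) := by
    have : R ≤ (s.card : ℝ) * x := by
      rw [hR]
      calc ∑ i ∈ s, μ i ≤ ∑ _i ∈ s, x := Finset.sum_le_sum fun i _ => hmax i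
        _ = (s.card : ℝ) * x := by rw [Finset.sum_const, nsmul_eq_mul]
    rw [hcard] at this
    nlinarith
  -- D identity
  set D : ℝ := (n : ℝ) * ((n:ℝ) - 1) * (x^2 + Q) - ((n:ℝ) - 1) * (x + R)^2 with hD
  have hDkey : D = ((n:ℝ) * x - (x + R))^2 + (n:ℝ) * Δ := by
    rw [hD, hΔ]; ring
  have hstmt : ((n : ℝ) * (n - 1) * (Matrix.trace (Aᴴ * A)).re
      - (n - 1) * (A.trace).re ^ 2) = D := by
    rw [hT, hS, hTsplit, hSsplit, hD]
  have hn0 : (n:ℝ) ≠ 0 := by positivity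
  have hnpos : (0:ℝ) < n := by positivity
  rw [hstmt, hT, hTsplit]
  constructor
  · intro h
    intro i j hi hj
    have hsqrt : Real.sqrt D = (n:ℝ) * x - (x + R) := by
      field_simp at h
      linarith
    have hD0 : 0 ≤ D := by rw [hDkey]; nlinarith
    have hDeq : D = ((n:ℝ) * x - (x + R))^2 := by
      rw [← Real.sq_sqrt hD0, hsqrt]
    have hΔz : Δ = 0 := by
      have : (n:ℝ) * Δ = 0 := by linarith [hDkey.symm.trans hDeq]
      rcases mul_eq_zero.mp this with h' | h'
      · exact absurd h' hn0
      · exact h'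
    have hzero : ∑ i ∈ s, ∑ j ∈ s, (μ i - μ j)^2 = 0 := by rw [hssq, hΔz]; ring
    have hinner := (Finset.sum_eq_zero_iff_of_nonneg
      (fun i _ => Finset.sum_nonneg fun j _ => sq_nonneg _)).mp hzero
    have hterm := (Finset.sum_eq_zero_iff_of_nonneg
      (fun j _ => sq_nonneg _)).mp (hinner i ((hmem i).mpr hi)) j ((hmem j).mpr hj)
    have := sq_eq_zero_iff.mp hterm
    linarith
  · intro h
    have hzero : ∑ i ∈ s, ∑ j ∈ s, (μ i - μ j)^2 = 0 := by
      apply Finset.sum_eq_zero; intro i hi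
      apply Finset.sum_eq_zero; intro j hj
      rw [h i j ((hmem i).mp hi) ((hmem j).mp hj)]; ring
    have hΔz : Δ = 0 := by rw [hzero] at hssq; linarith
    have hDeq : D = ((n:ℝ) * x - (x + R))^2 := by rw [hDkey, hΔz]; ring
    rw [hDeq, Real.sqrt_sq hc]
    field_simp
    ring
end
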